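/- Let F be a field with |F| > 2, let V be a vector space over F, let f : V → F be a function, and let x ∈ V. If f(a + λx) = f(a + x) for all a ∈ V and all nonzero λ ∈ F, then x ∈ rad(f). -/
import Mathlib


open scoped Classical

noncomputable section

/-- The radical of a function `f : V → F`, as a linear subspace of `V`. -/
def funRadical {F V : Type*} [Field F] [AddCommGroup V] [Module F V]
    (f : V → F) : Submodule F V where
  carrier := {w | ∀ (v : V) (lam : F), f (v + lam • w) = f v}
  zero_mem' := by intro v lam; simp
  add_mem' := by
    intro a b ha hb v lam
    have h1 : v + lam • (a + b) = (v + lam • a) + lam • b := by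
      rw [smul_add]; abel
    rw [h1, hb (v + lam • a) lam, ha v lam]
  smul_mem' := by
    intro c a ha v lam
    have h1 : v + lam • (c • a) = v + (lam * c) • a := by rw [smul_smul]
    rw [h1, ha v (lam * c)]

theorem stmt_0 {F V : Type*} [Field F] [AddCommGroup V] [Module F V]
    (hF : (2 : Cardinal) < Cardinal.mk F)
    (f : V → F) (x : V)
    (h : ∀ (a : V) (lam : F), lam ≠ 0 → f (a + lam • x) = f (a + x)) :
    x ∈ funRadical f := by
  -- get μ ≠ 0, 1
  obtain ⟨μ, hμ0, hμ1⟩ : ∃ μ : F, μ ≠ 0 ∧ μ ≠ 1 := by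
    by_contra hc
    push_neg at hc
    have : (Set.univ : Set F) ⊆ {0, 1} := by
      intro c _
      rcases eq_or_ne c 0 with h0 | h0
      · exact Or.inl h0
      · exact Or.inr (hc c h0)
    have hle : Cardinal.mk F ≤ 2 := by
      calc Cardinal.mk F = Cardinal.mk (Set.univ : Set F) := Cardinal.mk_univ.symm
        _ ≤ Cardinal.mk ({0, 1} : Set F) := Cardinal.mk_le_mk_of_subset this
        _ ≤ 2 := by simpa using Cardinal.mk_insert_le (s := ({1} : Set F)) (a := (0 : F))
    exact absurd hle (not_le.mpr hF)
  have key : ∀ v : V, f (v + x) = f v := by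
    intro v
    have h1 : f ((v - μ • x) + μ • x) = f ((v - μ • x) + x) := h _ μ hμ0
    have h2 : f (v + (1 - μ) • x) = f (v + x) := h v (1 - μ) (sub_ne_zero.mpr (Ne.symm hμ1))
    have e1 : (v - μ • x) + μ • x = v := by abel
    have e2 : (v - μ • x) + x = v + (1 - μ) • x := by
      rw [sub_smul, one_smul]; abel
    rw [e1, e2, h2] at h1
    exact h1.symm
  intro v lam
  rcases eq_or_ne lam 0 with h0 | h0
  · simp [h0]
  · rw [h v lam h0, key v]

end
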